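/- Let u(a,b) := ∫_{−1}^{1} √(a + bs)·(s+1)^{3/2} ds for (a,b) with |b| ≤ a. Fix x > 0 and r ∈ (−1, 0]. Then every (a,b) with |b| ≤ a and a + br = x·(1+r) satisfies a ≤ x, and consequently u(a,b) ≤ u(x,x). In other words, every price r ∈ (−1, 0] is a marginal utility-based price at the boundary endowment (x,x). -/

import Mathlib

lemma rpow_three_halves (t : ℝ) (ht : 0 ≤ t) :
    t ^ ((3 : ℝ) / 2) = Real.sqrt t * t := by
  rcases ht.eq_or_lt with h | h
  · rw [← h]
    rw [Real.zero_rpow (by norm_num)]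
    simp
  · rw [show (3 : ℝ)/2 = 1/2 + 1 by norm_num, Real.rpow_add h, Real.rpow_one,
      Real.sqrt_eq_rpow]

theorem stmt9 (u : ℝ → ℝ → ℝ)
    (hu : ∀ a b : ℝ, u a b = ∫ s in (-1 : ℝ)..1, Real.sqrt (a + b * s) * (s + 1) ^ ((3 : ℝ) / 2))
    (x : ℝ) (hx : 0 < x) (r : ℝ) (hr : r ∈ Set.Ioc (-1 : ℝ) 0) :
    ∀ a b : ℝ, |b| ≤ a → a + b * r = x * (1 + r) → a ≤ x ∧ u a b ≤ u x x := by
  obtain ⟨hr1, hr0⟩ := hr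
  intro a b hab heq
  obtain ⟨hnb, hba⟩ := abs_le.mp hab
  have hax : a ≤ x := by nlinarith [mul_nonneg (sub_nonneg.2 hba) (neg_nonneg.2 hr0)]
  have hbx : b ≤ x := hba.trans hax
  refine ⟨hax, ?_⟩
  set c := Real.sqrt x with hc
  have hc0 : 0 < c := Real.sqrt_pos.2 hx
  have hc2 : c ^ 2 = x := Real.sq_sqrt hx.le
  -- continuity facts
  have hcont_rpow : Continuous (fun s : ℝ => (s + 1) ^ ((3 : ℝ) / 2)) := by
    rw [continuous_iff_continuousAt]
    intro s
    exact (Real.continuousAt_rpow_const _ _ (Or.inr (by norm_num))).comp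
      (by fun_prop)
  have hf_int : ∀ p q : ℝ, IntervalIntegrable
      (fun s => Real.sqrt (p + q * s) * (s + 1) ^ ((3 : ℝ) / 2)) MeasureTheory.volume (-1) 1 := by
    intro p q
    exact ((Real.continuous_sqrt.comp (by fun_prop)).mul hcont_rpow).intervalIntegrable _ _
  -- the dominating polynomial
  set g : ℝ → ℝ := fun s => ((a + b * s) + x * (s + 1)) * (s + 1) / (2 * c) with hg
  have hg_int : IntervalIntegrable g MeasureTheory.volume (-1) 1 := by
    apply Continuous.intervalIntegrable; fun_prop
  -- pointwise bound
  have hpt : ∀ s ∈ Set.Icc (-1 : ℝ) 1,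
      Real.sqrt (a + b * s) * (s + 1) ^ ((3 : ℝ) / 2) ≤ g s := by
    intro s hs
    obtain ⟨hsl, hsr⟩ := hs
    have hs1 : 0 ≤ s + 1 := by linarith
    have hP : 0 ≤ a + b * s := by
      nlinarith [mul_nonneg (by linarith : (0:ℝ) ≤ a + b) hs1,
        mul_nonneg (by linarith : (0:ℝ) ≤ a - b) (by linarith : (0:ℝ) ≤ 1 - s)]
    rw [rpow_three_halves _ hs1]
    have hmul : Real.sqrt (a + b * s) * Real.sqrt (s + 1)
        = Real.sqrt ((a + b * s) * (s + 1)) := (Real.sqrt_mul hP _).symm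
    have hkey : 2 * c * Real.sqrt ((a + b * s) * (s + 1)) ≤ (a + b * s) + x * (s + 1) := by
      nlinarith [sq_nonneg (Real.sqrt (a + b * s) - c * Real.sqrt (s + 1)),
        Real.sq_sqrt hP, Real.sq_sqrt hs1, hmul, Real.sqrt_nonneg (s + 1),
        Real.sqrt_nonneg (a + b * s)]
    have : Real.sqrt (a + b * s) * (Real.sqrt (s + 1) * (s + 1))
        = Real.sqrt ((a + b * s) * (s + 1)) * (s + 1) := by rw [← hmul]; ring
    rw [this, hg]
    rw [le_div_iff₀ (by positivity : (0:ℝ) < 2 * c)]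
    nlinarith [mul_le_mul_of_nonneg_right hkey hs1,
      mul_nonneg (Real.sqrt_nonneg ((a + b * s) * (s + 1))) hs1]
  -- value of ∫ g
  have hg_val : (∫ s in (-1 : ℝ)..1, g s) = (a + b/3 + 4*x/3) / c := by
    have hderiv : ∀ s ∈ Set.uIcc (-1 : ℝ) 1, HasDerivAt
        (fun s : ℝ => ((a+x)*s + (a+b+2*x)*s^2/2 + (b+x)*s^3/3) / (2*c))
        (g s) s := by
      intro s _
      have h1 : HasDerivAt (fun s : ℝ => s) 1 s := hasDerivAt_id s
      have h2 : HasDerivAt (fun s : ℝ => s^2) (2*s) s := by simpa using hasDerivAt_pow 2 s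
      have h3 : HasDerivAt (fun s : ℝ => s^3) (3*s^2) s := by simpa using hasDerivAt_pow 3 s
      have := (((h1.const_mul (a+x)).add ((h2.const_mul (a+b+2*x)).div_const 2)).add
        ((h3.const_mul (b+x)).div_const 3)).div_const (2*c)
      convert this using 1
      · rfl
      · rfl
      · rfl
      rw [hg]; field_simp; ring
    rw [intervalIntegral.integral_eq_sub_of_hasDerivAt hderiv hg_int]
    field_simp
    ring
  -- value of u x x
  have hux : u x x = 8/3 * c := by
    rw [hu]
    have hcong : Set.EqOn (fun s => Real.sqrt (x + x * s) * (s + 1) ^ ((3 : ℝ) / 2))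
        (fun s => c * (s + 1)^2) (Set.uIcc (-1 : ℝ) 1) := by
      intro s hs
      rw [Set.uIcc_of_le (by norm_num : (-1:ℝ) ≤ 1)] at hs
      obtain ⟨hsl, hsr⟩ := hs
      have hs1 : 0 ≤ s + 1 := by linarith
      simp only
      rw [rpow_three_halves _ hs1, show x + x * s = x * (s + 1) by ring,
        Real.sqrt_mul hx.le]
      rw [← hc]
      have h5 := Real.mul_self_sqrt hs1
      linear_combination (c * (s + 1)) * h5
    rw [intervalIntegral.integral_congr hcong]
    have hderiv : ∀ s ∈ Set.uIcc (-1 : ℝ) 1, HasDerivAt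
        (fun s : ℝ => c * (s+1)^3 / 3) (c * (s + 1)^2) s := by
      intro s _
      have h := (((hasDerivAt_id s).add_const 1).pow 3).const_mul c
      convert h.div_const 3 using 1
      · rfl
      · rfl
      · rfl
      simp [id]; ring
    rw [intervalIntegral.integral_eq_sub_of_hasDerivAt hderiv
      (by apply Continuous.intervalIntegrable; fun_prop)]
    norm_num
    ring
  -- combine
  rw [hu a b, hux]
  calc (∫ s in (-1:ℝ)..1, Real.sqrt (a + b * s) * (s + 1) ^ ((3:ℝ)/2))
      ≤ ∫ s in (-1:ℝ)..1, g s :=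
        intervalIntegral.integral_mono_on (by norm_num) (hf_int a b) hg_int hpt
    _ = (a + b/3 + 4*x/3) / c := hg_val
    _ ≤ 8/3 * c := by
        rw [div_le_iff₀ hc0]
        nlinarith [hc2]
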